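/- Let P be a path in T with vertex sequence p(1),…,p(k), let u be a vertex not on P that is adjacent in T to the endpoint p(k), and let P' = P ∪ {u}. Assume d(P,u) > 0, 1 − λ·S̄(P') > 0, and α1 + α2·w_{T_u}·((2β/vt)·(w(T) − w_{T_u}) − 1/vt + β/vt) > 0. Then F(P') > F(P). -/

import Mathlib

open scoped ENNReal

noncomputable section

/-- A finite tree with positive edge lengths, nonnegative vertex weights,
and a positive cruising speed. -/
structure WeightedTree (V : Type*) [Fintype V] where
  G : SimpleGraph V
  isTree : G.IsTree
  len : Sym2 V → ℝ
  len_pos : ∀ e ∈ G.edgeSet, 0 < len e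
  w : V → ℝ
  w_nonneg : ∀ v, 0 ≤ w v
  vt : ℝ
  vt_pos : 0 < vt

namespace WeightedTree

variable {V : Type*} [Fintype V] [DecidableEq V] (T : WeightedTree V)

/-- `d x y`: the length of the unique path between `x` and `y`. -/
def d (x y : V) : ℝ :=
  (((T.isTree.existsUnique_path x y).choose).edges.map T.len).sum

/-- The closest vertex of the list `l` (the vertex sequence of a path) to `v`. -/
def closest (l : List V) (v : V) : V :=
  if h : ∃ u ∈ l, ∀ u' ∈ l, T.d u v ≤ T.d u' v then h.choose else v

/-- `d(P,v)`: the distance from the path with vertex sequence `l` to `v`. -/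
def dP (l : List V) (v : V) : ℝ := T.d (T.closest l v) v

/-- The weight of the branch of the vertex `q` with respect to the path with
vertex sequence `l`: the total weight of all vertices whose closest vertex on
the path is `q`. -/
def wBranch (l : List V) (q : V) : ℝ :=
  ∑ v ∈ Finset.univ.filter (fun v => T.closest l v = q), T.w v

/-- `w(T)`: total weight of the tree. -/
def wT : ℝ := ∑ v, T.w v

/-- `d̄_P(û,p) = ∑_j w_{T_{p(j)}} d(p(j), p)` for the path with vertex sequence `l`. -/
def dbar (l : List V) (p : V) : ℝ := (l.map (fun q => T.wBranch l q * T.d q p)).sum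

/-- `s_p(P) = (1/vt) d̄_P(û,p)` for a vertex `p` of the path. -/
def sOn (l : List V) (p : V) : ℝ := (1 / T.vt) * T.dbar l p

/-- `s_i(P) = (1/vt) d̄_P(û,p(i))`, where `p(i)` is the closest vertex of the path to `v_i`. -/
def s (l : List V) (v : V) : ℝ := T.sOn l (T.closest l v)

/-- Mean service time `S̄(P)`. -/
def Sbar (l : List V) : ℝ := ∑ v, T.w v * T.s l v

/-- Second moment `S̄²(P)` of the service time. -/
def S2bar (l : List V) : ℝ := ∑ v, T.w v * (T.s l v) ^ 2

/-- `T̄1(P) = (1/vt) ∑ w_i d(P, v_i)`. -/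
def T1 (l : List V) : ℝ := (1 / T.vt) * ∑ v, T.w v * T.dP l v

/-- `T̄2(P) = (1/vt) ∑ w_i d̄_P(û, p(i))`. -/
def T2 (l : List V) : ℝ := (1 / T.vt) * ∑ v, T.w v * T.dbar l (T.closest l v)

/-- The M/G/1 queueing delay `Q̄(P)`, valued in `[0,∞]`. -/
def Qbar (lam : ℝ) (l : List V) : ℝ≥0∞ :=
  if 0 < 1 - lam * T.Sbar l then
    ENNReal.ofReal (lam * T.S2bar l / (2 * (1 - lam * T.Sbar l)))
  else ⊤

/-- The M/G/1 queueing delay `Q̄(P)` as an extended real. -/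
def QbarE (lam : ℝ) (l : List V) : EReal :=
  if 0 < 1 - lam * T.Sbar l then
    ((lam * T.S2bar l / (2 * (1 - lam * T.Sbar l)) : ℝ) : EReal)
  else ⊤

/-- `|P|`: the total length of the path `P`. -/
def plen {a b : V} (P : T.G.Walk a b) : ℝ := (P.edges.map T.len).sum

/-- The objective `F(P) = α1·|P| + α2·(β·(Q̄(P)+T̄2(P)) + (1-β)·T̄1(P))`. -/
def F (α1 α2 β lam : ℝ) {a b : V} (P : T.G.Walk a b) : EReal :=
  ((α1 * T.plen P : ℝ) : EReal) +
    (α2 : EReal) *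
      ((β : EReal) * (T.QbarE lam P.support + ((T.T2 P.support : ℝ) : EReal)) +
        (((1 - β) * T.T1 P.support : ℝ) : EReal))

end WeightedTree

set_option linter.unusedSectionVars false

namespace WeightedTree

open SimpleGraph

variable {V : Type*} [Fintype V] [DecidableEq V] (T : WeightedTree V)

lemma sum_edges_nonneg {x y : V} (W : T.G.Walk x y) : 0 ≤ (W.edges.map T.len).sum := by
  apply List.sum_nonneg
  intro r hr
  obtain ⟨e, he, rfl⟩ := List.mem_map.1 hr
  exact (T.len_pos e (W.edges_subset_edgeSet he)).le

lemma d_eq {x y : V} (W : T.G.Walk x y) (hW : W.IsPath) :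
    T.d x y = (W.edges.map T.len).sum := by
  show (((T.isTree.existsUnique_path x y).choose).edges.map T.len).sum = _
  rw [← (T.isTree.existsUnique_path x y).choose_spec.2 W hW]

lemma d_nonneg (x y : V) : 0 ≤ T.d x y :=
  T.sum_edges_nonneg ((T.isTree.existsUnique_path x y).choose)

lemma d_self (x : V) : T.d x x = 0 := by
  rw [T.d_eq Walk.nil (Walk.IsPath.nil)]; simp

lemma d_symm (x y : V) : T.d x y = T.d y x := by
  obtain ⟨W, hW, -⟩ := T.isTree.existsUnique_path x y
  rw [T.d_eq W hW, T.d_eq W.reverse hW.reverse, Walk.edges_reverse, List.map_reverse,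
    List.sum_reverse]

lemma d_pos {x y : V} (h : x ≠ y) : 0 < T.d x y := by
  obtain ⟨W, hW, -⟩ := T.isTree.existsUnique_path x y
  rw [T.d_eq W hW]
  cases W with
  | nil => exact absurd rfl h
  | cons hadj W' =>
    rw [Walk.edges_cons, List.map_cons, List.sum_cons]
    have h1 := T.len_pos _ (T.G.mem_edgeSet.2 hadj)
    have h2 := T.sum_edges_nonneg W'
    linarith

lemma d_append {x y z : V} (W1 : T.G.Walk x y) (W2 : T.G.Walk y z)
    (h : (W1.append W2).IsPath) : T.d x z = T.d x y + T.d y z := by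
  rw [T.d_eq _ h, T.d_eq W1 h.of_append_left, T.d_eq W2 h.of_append_right,
    Walk.edges_append, List.map_append, List.sum_append]

lemma isPath_append {x y z : V} {W1 : T.G.Walk x y} {W2 : T.G.Walk y z}
    (h1 : W1.IsPath) (h2 : W2.IsPath)
    (h : ∀ v ∈ W1.support, v ∈ W2.support → v = y) : (W1.append W2).IsPath := by
  rw [Walk.isPath_def, Walk.support_append]
  have h2' := h2.support_nodup
  rw [W2.support_eq_cons, List.nodup_cons] at h2'
  refine List.Nodup.append h1.support_nodup h2'.2 ?_
  intro v hv1 hv2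
  have hv2' : v ∈ W2.support := List.mem_of_mem_tail hv2
  exact h2'.1 ((h v hv1 hv2') ▸ hv2)

lemma exists_segment {x y a b : V} (P : T.G.Walk a b) (hP : P.IsPath)
    (hx : x ∈ P.support) (hy : y ∈ P.support) :
    ∃ W : T.G.Walk x y, W.IsPath ∧ ∀ z ∈ W.support, z ∈ P.support := by
  by_cases h : x ∈ (P.takeUntil y hy).support
  · exact ⟨(P.takeUntil y hy).dropUntil x h, (hP.takeUntil hy).dropUntil h,
      fun z hz => (P.support_takeUntil_subset hy)
        ((Walk.support_dropUntil_subset _ h) hz)⟩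
  · have h2 : x ∈ (P.dropUntil y hy).support := by
      have hspec := P.take_spec hy
      have hx' := hx
      rw [← hspec, Walk.mem_support_append_iff] at hx'
      tauto
    refine ⟨((P.dropUntil y hy).takeUntil x h2).reverse,
      ((hP.dropUntil hy).takeUntil h2).reverse, fun z hz => ?_⟩
    rw [Walk.support_reverse, List.mem_reverse] at hz
    exact (P.support_dropUntil_subset hy) ((Walk.support_takeUntil_subset _ h2) hz)

lemma exists_proj {a b : V} (P : T.G.Walk a b) (hP : P.IsPath) (v : V) :
    ∃ c ∈ P.support, (∀ p ∈ P.support, T.d c v ≤ T.d p v) ∧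
      ∀ p ∈ P.support, T.d p v = T.d p c + T.d c v := by
  obtain ⟨c, hc, hmin⟩ := P.support.toFinset.exists_min_image (fun p => T.d p v)
    ⟨a, List.mem_toFinset.2 P.start_mem_support⟩
  rw [List.mem_toFinset] at hc
  have hmin' : ∀ p ∈ P.support, T.d c v ≤ T.d p v := fun p hp =>
    hmin p (List.mem_toFinset.2 hp)
  refine ⟨c, hc, hmin', fun p hp => ?_⟩
  obtain ⟨W, hWp, hWsub⟩ := T.exists_segment P hP hp hc
  obtain ⟨Q, hQ, -⟩ := T.isTree.existsUnique_path c v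
  have hkey : ∀ z ∈ W.support, z ∈ Q.support → z = c := by
    intro z hzW hzQ
    by_contra hzc
    have hzP := hWsub z hzW
    have hQ' : ((Q.takeUntil z hzQ).append (Q.dropUntil z hzQ)).IsPath := by
      rw [Q.take_spec hzQ]; exact hQ
    have hsplit := T.d_append _ _ hQ'
    have hpos := T.d_pos (Ne.symm hzc)
    have hm := hmin' z hzP
    linarith
  exact T.d_append W Q (T.isPath_append hWp hQ hkey)

lemma closest_eq {l : List V} {v c : V} (hc : c ∈ l)
    (hproj : ∀ p ∈ l, T.d p v = T.d p c + T.d c v) : T.closest l v = c := by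
  have hex : ∃ u ∈ l, ∀ u' ∈ l, T.d u v ≤ T.d u' v :=
    ⟨c, hc, fun p hp => by rw [hproj p hp]; linarith [T.d_nonneg p c]⟩
  rw [WeightedTree.closest, dif_pos hex]
  obtain ⟨hmem, hmin⟩ := hex.choose_spec
  have h1 : T.d hex.choose v ≤ T.d c v := hmin c hc
  have h2 := hproj _ hmem
  by_contra hne
  have := T.d_pos hne
  linarith

end WeightedTree
set_option linter.unusedSectionVars false
set_option maxHeartbeats 1000000

namespace WeightedTree

open SimpleGraph

variable {V : Type*} [Fintype V] [DecidableEq V] (T : WeightedTree V)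

lemma wBranch_nonneg (l : List V) (q : V) : 0 ≤ T.wBranch l q :=
  Finset.sum_nonneg fun v _ => T.w_nonneg v

lemma dbar_nonneg (l : List V) (p : V) : 0 ≤ T.dbar l p := by
  apply List.sum_nonneg
  intro r hr
  obtain ⟨q, hq, rfl⟩ := List.mem_map.1 hr
  exact mul_nonneg (T.wBranch_nonneg l q) (T.d_nonneg q p)

lemma s_nonneg (l : List V) (v : V) : 0 ≤ T.s l v := by
  unfold s sOn
  have h1 : (0:ℝ) < T.vt := T.vt_pos
  have h2 := T.dbar_nonneg l (T.closest l v)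
  positivity

lemma S2bar_nonneg (l : List V) : 0 ≤ T.S2bar l :=
  Finset.sum_nonneg fun v _ => mul_nonneg (T.w_nonneg v) (sq_nonneg _)

lemma T2_eq_Sbar (l : List V) : T.T2 l = T.Sbar l := by
  unfold T2 Sbar s sOn
  rw [Finset.mul_sum]
  exact Finset.sum_congr rfl fun v _ => by ring

section Extension

variable {a b u : V}

lemma isPath_concat (P : T.G.Walk a b) (hP : P.IsPath) (hadj : T.G.Adj b u)
    (hu : u ∉ P.support) : (P.concat hadj).IsPath := by
  rw [Walk.concat_eq_append]
  refine T.isPath_append hP ?_ ?_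
  · rw [Walk.isPath_def]; simp [hadj.ne]
  · intro v hv1 hv2
    simp only [Walk.support_cons, Walk.support_nil, List.mem_cons,
      List.mem_singleton, List.not_mem_nil, or_false] at hv2
    rcases hv2 with rfl | rfl
    · rfl
    · exact absurd hv1 hu

lemma map_support_concat (P : T.G.Walk a b) (hadj : T.G.Adj b u) (f : V → ℝ) :
    (P.concat hadj).support.map f = P.support.map f ++ [f u] := by
  rw [Walk.support_concat, List.map_append, List.map_singleton]

lemma mem_support_concat (P : T.G.Walk a b) (hadj : T.G.Adj b u) {p : V} (hp : p ∈ P.support) : p ∈ (P.concat hadj).support := by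
  rw [Walk.support_concat, List.mem_append]
  exact Or.inl hp

lemma u_mem_support_concat (P : T.G.Walk a b) (hadj : T.G.Adj b u) : u ∈ (P.concat hadj).support := by
  rw [Walk.support_concat, List.mem_append]
  simp

lemma d_proj_u (P : T.G.Walk a b) (hP : P.IsPath) (hadj : T.G.Adj b u)
    (hu : u ∉ P.support) : ∀ p ∈ P.support, T.d p u = T.d p b + T.d b u := by
  intro p hp
  obtain ⟨W, hWp, hWsub⟩ := T.exists_segment P hP hp P.end_mem_support
  have hpath : (W.append (Walk.cons hadj Walk.nil)).IsPath := by
    refine T.isPath_append hWp ?_ ?_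
    · rw [Walk.isPath_def]; simp [hadj.ne]
    · intro v hv1 hv2
      simp only [Walk.support_cons, Walk.support_nil, List.mem_cons,
        List.mem_singleton, List.not_mem_nil, or_false] at hv2
      rcases hv2 with rfl | rfl
      · rfl
      · exact absurd (hWsub _ hv1) hu
  exact T.d_append _ _ hpath

lemma closest_P_u (P : T.G.Walk a b) (hP : P.IsPath) (hadj : T.G.Adj b u)
    (hu : u ∉ P.support) : T.closest P.support u = b :=
  T.closest_eq P.end_mem_support (T.d_proj_u P hP hadj hu)

lemma closest_cases (P : T.G.Walk a b) (hP : P.IsPath) (hadj : T.G.Adj b u)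
    (hu : u ∉ P.support) (v : V) :
    (T.closest (P.concat hadj).support v = u ∧ T.closest P.support v = b ∧
      T.d b v = T.d b u + T.d u v) ∨
    (T.closest (P.concat hadj).support v = T.closest P.support v ∧
      T.closest P.support v ∈ P.support) := by
  obtain ⟨c, hc, hmin, hproj⟩ :=
    T.exists_proj (P.concat hadj) (T.isPath_concat P hP hadj hu) v
  have hcl' : T.closest (P.concat hadj).support v = c := T.closest_eq hc hproj
  by_cases hcu : c = u
  · left
    rw [hcu] at hcl' hproj
    have hbv : T.d b v = T.d b u + T.d u v :=
      hproj b (T.mem_support_concat P hadj P.end_mem_support)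
    have hproj2 : ∀ p ∈ P.support, T.d p v = T.d p b + T.d b v := by
      intro p hp
      rw [hproj p (T.mem_support_concat P hadj hp), T.d_proj_u P hP hadj hu p hp, hbv]
      ring
    exact ⟨hcl', T.closest_eq P.end_mem_support hproj2, hbv⟩
  · right
    have hcP : c ∈ P.support := by
      have := hc
      rw [Walk.support_concat, List.mem_append] at this
      rcases this with h | h
      · exact h
      · rw [List.mem_singleton] at h; exact absurd h hcu
    have h2 : T.closest P.support v = c :=
      T.closest_eq hcP (fun p hp => hproj p (T.mem_support_concat P hadj hp))
    rw [hcl', h2]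
    exact ⟨rfl, hcP⟩

lemma wBranch_concat_ne (P : T.G.Walk a b) (hP : P.IsPath) (hadj : T.G.Adj b u)
    (hu : u ∉ P.support) (q : V) (hq : q ∈ P.support) (hqb : q ≠ b) :
    T.wBranch (P.concat hadj).support q = T.wBranch P.support q := by
  unfold wBranch
  congr 1
  ext v
  simp only [Finset.mem_filter, Finset.mem_univ, true_and]
  have hqu : q ≠ u := fun h => hu (h ▸ hq)
  rcases T.closest_cases P hP hadj hu v with ⟨h1, h2, -⟩ | ⟨h1, -⟩
  · rw [h1, h2]
    exact iff_of_false (Ne.symm hqu) (Ne.symm hqb)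
  · rw [h1]

lemma wBranch_concat_b (P : T.G.Walk a b) (hP : P.IsPath) (hadj : T.G.Adj b u)
    (hu : u ∉ P.support) :
    T.wBranch P.support b
      = T.wBranch (P.concat hadj).support b + T.wBranch (P.concat hadj).support u := by
  have hbu : b ≠ u := fun h => hu (h ▸ P.end_mem_support)
  unfold wBranch
  rw [← Finset.sum_union (by
    rw [Finset.disjoint_left]
    intro v h1 h2
    rw [Finset.mem_filter] at h1 h2
    exact hbu (h1.2 ▸ h2.2))]
  congr 1
  ext v
  simp only [Finset.mem_filter, Finset.mem_univ, true_and, Finset.mem_union]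
  rcases T.closest_cases P hP hadj hu v with ⟨h1, h2, -⟩ | ⟨h1, h2⟩
  · rw [h1, h2]
    simp
  · rw [h1]
    constructor
    · exact Or.inl
    · rintro (h | h)
      · exact h
      · exact absurd (h ▸ h2) hu

lemma sum_wBranch_concat (P : T.G.Walk a b) (hP : P.IsPath) (hadj : T.G.Adj b u)
    (hu : u ∉ P.support) :
    ∑ q ∈ (P.concat hadj).support.toFinset, T.wBranch (P.concat hadj).support q
      = T.wT := by
  unfold wBranch wT
  refine Finset.sum_fiberwise_of_maps_to ?_ T.w
  intro v _
  rw [List.mem_toFinset]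
  rcases T.closest_cases P hP hadj hu v with ⟨h1, -, -⟩ | ⟨h1, h2⟩
  · rw [h1]; exact T.u_mem_support_concat P hadj
  · rw [h1]; exact T.mem_support_concat P hadj h2

lemma sum_wBranch_concat_on (P : T.G.Walk a b) (hP : P.IsPath) (hadj : T.G.Adj b u)
    (hu : u ∉ P.support) :
    ∑ q ∈ P.support.toFinset, T.wBranch (P.concat hadj).support q
      = T.wT - T.wBranch (P.concat hadj).support u := by
  have h := T.sum_wBranch_concat P hP hadj hu
  have hset : (P.concat hadj).support.toFinset = insert u P.support.toFinset := by
    ext x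
    simp [Walk.support_concat, List.concat_eq_append, or_comm]
  rw [hset, Finset.sum_insert (by simp [hu])] at h
  linarith

lemma dbar_concat_on (P : T.G.Walk a b) (hP : P.IsPath) (hadj : T.G.Adj b u)
    (hu : u ∉ P.support) (p : V) (hp : p ∈ P.support) :
    T.dbar (P.concat hadj).support p
      = T.dbar P.support p + T.wBranch (P.concat hadj).support u * T.d b u := by
  have hb : b ∈ P.support := P.end_mem_support
  unfold dbar
  rw [T.map_support_concat P hadj, List.sum_append, List.sum_singleton]
  rw [← List.sum_toFinset _ hP.support_nodup, ← List.sum_toFinset _ hP.support_nodup]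
  have key : ∑ q ∈ P.support.toFinset,
      (T.wBranch (P.concat hadj).support q * T.d q p - T.wBranch P.support q * T.d q p)
      = -(T.wBranch (P.concat hadj).support u * T.d b p) := by
    rw [Finset.sum_eq_single b]
    · have hB := T.wBranch_concat_b P hP hadj hu
      have : T.wBranch (P.concat hadj).support b
          = T.wBranch P.support b - T.wBranch (P.concat hadj).support u := by linarith
      rw [this]; ring
    · intro q hq hqb
      rw [T.wBranch_concat_ne P hP hadj hu q (List.mem_toFinset.1 hq) hqb]; ring
    · intro hb'; exact absurd (List.mem_toFinset.2 hb) hb'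
  rw [Finset.sum_sub_distrib] at key
  have hdup : T.d u p = T.d b p + T.d b u := by
    rw [T.d_symm u p, T.d_proj_u P hP hadj hu p hp, T.d_symm p b]
  rw [hdup]
  have hgoal : ∑ q ∈ P.support.toFinset, T.wBranch (P.concat hadj).support q * T.d q p
      = (∑ q ∈ P.support.toFinset, T.wBranch P.support q * T.d q p)
        - T.wBranch (P.concat hadj).support u * T.d b p := by linarith
  rw [hgoal]; ring

lemma dbar_concat_u (P : T.G.Walk a b) (hP : P.IsPath) (hadj : T.G.Adj b u)
    (hu : u ∉ P.support) :
    T.dbar (P.concat hadj).support u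
      = T.dbar P.support b + (T.wT - T.wBranch (P.concat hadj).support u) * T.d b u := by
  have hb : b ∈ P.support := P.end_mem_support
  unfold dbar
  rw [T.map_support_concat P hadj, List.sum_append, List.sum_singleton, T.d_self,
    mul_zero, add_zero]
  rw [← List.sum_toFinset _ hP.support_nodup, ← List.sum_toFinset _ hP.support_nodup]
  have h1 : ∀ q ∈ P.support.toFinset,
      T.wBranch (P.concat hadj).support q * T.d q u
        = T.wBranch (P.concat hadj).support q * T.d q b
          + T.wBranch (P.concat hadj).support q * T.d b u := by
    intro q hq
    rw [T.d_proj_u P hP hadj hu q (List.mem_toFinset.1 hq)]; ring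
  rw [Finset.sum_congr rfl h1, Finset.sum_add_distrib, ← Finset.sum_mul,
    T.sum_wBranch_concat_on P hP hadj hu]
  have key : ∑ q ∈ P.support.toFinset,
      (T.wBranch (P.concat hadj).support q * T.d q b - T.wBranch P.support q * T.d q b)
      = 0 := by
    rw [Finset.sum_eq_single b]
    · rw [T.d_self]; ring
    · intro q hq hqb
      rw [T.wBranch_concat_ne P hP hadj hu q (List.mem_toFinset.1 hq) hqb]; ring
    · intro hb'; exact absurd (List.mem_toFinset.2 hb) hb'
  rw [Finset.sum_sub_distrib] at key
  have hgoal : ∑ q ∈ P.support.toFinset, T.wBranch (P.concat hadj).support q * T.d q b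
      = ∑ q ∈ P.support.toFinset, T.wBranch P.support q * T.d q b := by linarith
  rw [hgoal]

lemma s_concat (P : T.G.Walk a b) (hP : P.IsPath) (hadj : T.G.Adj b u)
    (hu : u ∉ P.support) (v : V) :
    T.s (P.concat hadj).support v = T.s P.support v +
      (if T.closest (P.concat hadj).support v = u
        then (T.wT - T.wBranch (P.concat hadj).support u) * T.d b u / T.vt
        else T.wBranch (P.concat hadj).support u * T.d b u / T.vt) := by
  have hvt : T.vt ≠ 0 := T.vt_pos.ne'
  unfold s sOn
  rcases T.closest_cases P hP hadj hu v with ⟨h1, h2, -⟩ | ⟨h1, h2⟩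
  · rw [h1, h2, if_pos rfl, T.dbar_concat_u P hP hadj hu]
    ring
  · rw [h1, if_neg (show ¬T.closest P.support v = u from fun h => hu (h ▸ h2)),
      T.dbar_concat_on P hP hadj hu _ h2]
    ring

lemma dP_concat (P : T.G.Walk a b) (hP : P.IsPath) (hadj : T.G.Adj b u)
    (hu : u ∉ P.support) (v : V) :
    T.dP (P.concat hadj).support v = T.dP P.support v -
      (if T.closest (P.concat hadj).support v = u then T.d b u else 0) := by
  unfold dP
  rcases T.closest_cases P hP hadj hu v with ⟨h1, h2, h3⟩ | ⟨h1, h2⟩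
  · rw [h1, h2, if_pos rfl, h3]; ring
  · rw [h1, if_neg (show ¬T.closest P.support v = u from fun h => hu (h ▸ h2))]; ring

lemma sum_ite_closest (P : T.G.Walk a b) (hadj : T.G.Adj b u) (c1 c2 : ℝ) :
    ∑ v, T.w v * (if T.closest (P.concat hadj).support v = u then c1 else c2)
      = T.wBranch (P.concat hadj).support u * c1
        + (T.wT - T.wBranch (P.concat hadj).support u) * c2 := by
  rw [← Finset.sum_filter_add_sum_filter_not Finset.univ
    (fun v => T.closest (P.concat hadj).support v = u)]
  have e1 : ∑ v ∈ Finset.univ.filter (fun v => T.closest (P.concat hadj).support v = u),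
      T.w v * (if T.closest (P.concat hadj).support v = u then c1 else c2)
      = (∑ v ∈ Finset.univ.filter (fun v => T.closest (P.concat hadj).support v = u),
          T.w v) * c1 := by
    rw [Finset.sum_mul]
    refine Finset.sum_congr rfl fun v hv => ?_
    rw [if_pos (Finset.mem_filter.1 hv).2]
  have e2 : ∑ v ∈ Finset.univ.filter (fun v => ¬T.closest (P.concat hadj).support v = u),
      T.w v * (if T.closest (P.concat hadj).support v = u then c1 else c2)
      = (∑ v ∈ Finset.univ.filter (fun v => ¬T.closest (P.concat hadj).support v = u),
          T.w v) * c2 := by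
    rw [Finset.sum_mul]
    refine Finset.sum_congr rfl fun v hv => ?_
    rw [if_neg (Finset.mem_filter.1 hv).2]
  have e3 : (∑ v ∈ Finset.univ.filter
        (fun v => ¬T.closest (P.concat hadj).support v = u), T.w v)
      = T.wT - T.wBranch (P.concat hadj).support u := by
    have h := Finset.sum_filter_add_sum_filter_not Finset.univ
      (fun v => T.closest (P.concat hadj).support v = u) T.w
    have h2 : T.wBranch (P.concat hadj).support u
        = ∑ v ∈ Finset.univ.filter
            (fun v => T.closest (P.concat hadj).support v = u), T.w v := rfl
    unfold wT
    rw [h2]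
    linarith
  rw [e1, e2, e3]
  rfl

end Extension

end WeightedTree
/-- a sufficient condition under which extending a path `P` by an
adjacent vertex `u` strictly increases the objective `F`. -/
theorem F_lt_of_extension {V : Type*} [Fintype V] [DecidableEq V] (T : WeightedTree V)
    {a b u : V} (P : T.G.Walk a b) (hP : P.IsPath)
    (hadj : T.G.Adj b u) (hu : u ∉ P.support)
    (lam α1 α2 β : ℝ) (hlam : 0 < lam) (hα1 : 0 ≤ α1) (hα2 : 0 ≤ α2)
    (hβ0 : 0 ≤ β) (hβ1 : β ≤ 1)
    (hd : 0 < T.dP P.support u)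
    (hstable : 0 < 1 - lam * T.Sbar (P.concat hadj).support)
    (hcond : 0 < α1 + α2 * T.wBranch (P.concat hadj).support u *
        ((2 * β / T.vt) * (T.wT - T.wBranch (P.concat hadj).support u)
          - 1 / T.vt + β / T.vt)) :
    T.F α1 α2 β lam P < T.F α1 α2 β lam (P.concat hadj) := by
  classical
  open WeightedTree SimpleGraph in
  have hvt : (0:ℝ) < T.vt := T.vt_pos
  have hd0 : 0 < T.d b u := by
    have hcb : T.closest P.support u = b := T.closest_P_u P hP hadj hu
    unfold WeightedTree.dP at hd
    rwa [hcb] at hd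
  have hWu0 : 0 ≤ T.wBranch (P.concat hadj).support u := T.wBranch_nonneg _ _
  have hWuT : T.wBranch (P.concat hadj).support u ≤ T.wT := by
    unfold WeightedTree.wBranch WeightedTree.wT
    exact Finset.sum_le_sum_of_subset_of_nonneg (Finset.filter_subset _ _)
      (fun v _ _ => T.w_nonneg v)
  have hSbar : T.Sbar (P.concat hadj).support
      = T.Sbar P.support + 2 * T.wBranch (P.concat hadj).support u
          * (T.wT - T.wBranch (P.concat hadj).support u) * T.d b u / T.vt := by
    unfold WeightedTree.Sbar
    rw [Finset.sum_congr rfl (fun v _ => by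
      rw [T.s_concat P hP hadj hu v, mul_add]),
      Finset.sum_add_distrib, T.sum_ite_closest P hadj]
    ring
  have hT1 : T.T1 (P.concat hadj).support
      = T.T1 P.support - T.wBranch (P.concat hadj).support u * T.d b u / T.vt := by
    unfold WeightedTree.T1
    rw [Finset.sum_congr rfl (fun v _ => by
      rw [T.dP_concat P hP hadj hu v, mul_sub]),
      Finset.sum_sub_distrib, T.sum_ite_closest P hadj]
    field_simp
    ring
  have hSble : T.Sbar P.support ≤ T.Sbar (P.concat hadj).support := by
    rw [hSbar]
    have h1 : 0 ≤ T.wT - T.wBranch (P.concat hadj).support u := by linarith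
    have h2 : 0 ≤ 2 * T.wBranch (P.concat hadj).support u
        * (T.wT - T.wBranch (P.concat hadj).support u) * T.d b u / T.vt :=
      div_nonneg (mul_nonneg (mul_nonneg (mul_nonneg (by norm_num) hWu0) h1) hd0.le) hvt.le
    linarith
  have hstable0 : 0 < 1 - lam * T.Sbar P.support := by
    have h2 : lam * T.Sbar P.support ≤ lam * T.Sbar (P.concat hadj).support :=
      mul_le_mul_of_nonneg_left hSble hlam.le
    linarith
  have hS2 : T.S2bar P.support ≤ T.S2bar (P.concat hadj).support := by
    unfold WeightedTree.S2bar
    refine Finset.sum_le_sum fun v _ => ?_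
    refine mul_le_mul_of_nonneg_left ?_ (T.w_nonneg v)
    have h1 := T.s_nonneg P.support v
    have h2 : T.s P.support v ≤ T.s (P.concat hadj).support v := by
      rw [T.s_concat P hP hadj hu v]
      have h3 : 0 ≤ (if T.closest (P.concat hadj).support v = u
          then (T.wT - T.wBranch (P.concat hadj).support u) * T.d b u / T.vt
          else T.wBranch (P.concat hadj).support u * T.d b u / T.vt) := by
        split_ifs
        · exact div_nonneg (mul_nonneg (by linarith) hd0.le) hvt.le
        · exact div_nonneg (mul_nonneg hWu0 hd0.le) hvt.le
      linarith
    exact pow_le_pow_left₀ h1 h2 2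
  set q1 : ℝ := lam * T.S2bar P.support / (2 * (1 - lam * T.Sbar P.support)) with hq1def
  set q2 : ℝ := lam * T.S2bar (P.concat hadj).support
      / (2 * (1 - lam * T.Sbar (P.concat hadj).support)) with hq2def
  have hQ1 : T.QbarE lam P.support = ((q1 : ℝ) : EReal) := by
    unfold WeightedTree.QbarE
    rw [if_pos hstable0]
  have hQ2 : T.QbarE lam (P.concat hadj).support = ((q2 : ℝ) : EReal) := by
    unfold WeightedTree.QbarE
    rw [if_pos hstable]
  have hqq : q1 ≤ q2 := by
    rw [hq1def, hq2def]
    have h4 : lam * T.Sbar P.support ≤ lam * T.Sbar (P.concat hadj).support :=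
      mul_le_mul_of_nonneg_left hSble hlam.le
    exact div_le_div₀ (mul_nonneg hlam.le (T.S2bar_nonneg _))
      (mul_le_mul_of_nonneg_left hS2 hlam.le) (by linarith) (by linarith)
  have hplen : T.plen (P.concat hadj) = T.plen P + T.d b u := by
    unfold WeightedTree.plen
    rw [Walk.edges_concat, List.concat_eq_append, List.map_append, List.sum_append,
      List.map_singleton, List.sum_singleton]
    congr 1
    rw [T.d_eq (Walk.cons hadj Walk.nil) (by rw [Walk.isPath_def]; simp [hadj.ne])]
    simp
  unfold WeightedTree.F
  rw [hQ1, hQ2, T.T2_eq_Sbar, T.T2_eq_Sbar, hplen, hSbar, hT1]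
  norm_cast
  have key : α1 * (T.plen P + T.d b u) +
        α2 * (β * (q2 + (T.Sbar P.support + 2 * T.wBranch (P.concat hadj).support u
            * (T.wT - T.wBranch (P.concat hadj).support u) * T.d b u / T.vt))
          + (1 - β) * (T.T1 P.support
              - T.wBranch (P.concat hadj).support u * T.d b u / T.vt))
      - (α1 * T.plen P + α2 * (β * (q1 + T.Sbar P.support) + (1 - β) * T.T1 P.support))
      = (α1 + α2 * T.wBranch (P.concat hadj).support u *
          ((2 * β / T.vt) * (T.wT - T.wBranch (P.concat hadj).support u)
            - 1 / T.vt + β / T.vt)) * T.d b u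
        + α2 * β * (q2 - q1) := by
    field_simp
    ring
  have h5 := mul_pos hcond hd0
  have h6 : 0 ≤ α2 * β * (q2 - q1) :=
    mul_nonneg (mul_nonneg hα2 hβ0) (by linarith)
  linarith
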